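/- Let p > 0. At any point (z, 0) of the ellipsoid E = {(z,w) : |z|² + |w|^{2p} < 1} with z real, the determinant of the Bergman metric of E equals det g = 2(2p+1)(p²+3p+2)·(1 - z²)^{-1/p} / (p·(p+1)²·(1 - z²)²). -/

import Mathlib

noncomputable section

/-- The Bergman kernel of `E(1,1,p)` (D'Angelo's formula), polarized as a holomorphic
function of independent complex variables `z, z̄, w, w̄`:
`K = c₁ φ^{-2+1/p} ψ^{-2} + c₂ φ^{-2+2/p} ψ^{-3}` with `φ = 1 - z z̄`,
`ψ = φ^{1/p} - w w̄`, `c₁ = (p-1)/(pπ²)`, `c₂ = 2/(pπ²)`. -/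
def Kc (p : ℝ) (z zb w wb : ℂ) : ℂ :=
  (((p - 1) / (p * Real.pi ^ 2) : ℝ) : ℂ) * (1 - z * zb) ^ ((-2 + 1 / p : ℝ) : ℂ)
      * ((1 - z * zb) ^ ((1 / p : ℝ) : ℂ) - w * wb) ^ (-2 : ℂ)
    + ((2 / (p * Real.pi ^ 2) : ℝ) : ℂ) * (1 - z * zb) ^ ((-2 + 2 / p : ℝ) : ℂ)
      * ((1 - z * zb) ^ ((1 / p : ℝ) : ℂ) - w * wb) ^ (-3 : ℂ)

/-- Wirtinger derivative `∂/∂z` (first slot). -/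
def D1 (F : ℂ → ℂ → ℂ → ℂ → ℂ) : ℂ → ℂ → ℂ → ℂ → ℂ :=
  fun z zb w wb => deriv (fun t => F t zb w wb) z

/-- Wirtinger derivative `∂/∂z̄` (second slot). -/
def D1b (F : ℂ → ℂ → ℂ → ℂ → ℂ) : ℂ → ℂ → ℂ → ℂ → ℂ :=
  fun z zb w wb => deriv (fun t => F z t w wb) zb

/-- Wirtinger derivative `∂/∂w` (third slot). -/
def D2 (F : ℂ → ℂ → ℂ → ℂ → ℂ) : ℂ → ℂ → ℂ → ℂ → ℂ :=
  fun z zb w wb => deriv (fun t => F z zb t wb) w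

/-- Wirtinger derivative `∂/∂w̄` (fourth slot). -/
def D2b (F : ℂ → ℂ → ℂ → ℂ → ℂ) : ℂ → ℂ → ℂ → ℂ → ℂ :=
  fun z zb w wb => deriv (fun t => F z zb w t) wb

/-- `log K`. -/
def logK (p : ℝ) : ℂ → ℂ → ℂ → ℂ → ℂ :=
  fun z zb w wb => Complex.log (Kc p z zb w wb)

/-- Bergman metric component `g_{1 1̄} = ∂² log K / ∂z ∂z̄`. -/
def g11 (p : ℝ) : ℂ → ℂ → ℂ → ℂ → ℂ := D1 (D1b (logK p))

/-- Bergman metric component `g_{1 2̄} = ∂² log K / ∂z ∂w̄`. -/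
def g12 (p : ℝ) : ℂ → ℂ → ℂ → ℂ → ℂ := D1 (D2b (logK p))

/-- Bergman metric component `g_{2 1̄} = ∂² log K / ∂w ∂z̄`. -/
def g21 (p : ℝ) : ℂ → ℂ → ℂ → ℂ → ℂ := D2 (D1b (logK p))

/-- Bergman metric component `g_{2 2̄} = ∂² log K / ∂w ∂w̄`. -/
def g22 (p : ℝ) : ℂ → ℂ → ℂ → ℂ → ℂ := D2 (D2b (logK p))

/-- `det g = g_{1 1̄} g_{2 2̄} - g_{1 2̄} g_{2 1̄}`. -/
def detg (p : ℝ) : ℂ → ℂ → ℂ → ℂ → ℂ :=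
  fun z zb w wb => g11 p z zb w wb * g22 p z zb w wb - g12 p z zb w wb * g21 p z zb w wb

/-- `Ric_{1 1̄} = -∂² log det g / ∂z ∂z̄`. -/
def Ric11 (p : ℝ) : ℂ → ℂ → ℂ → ℂ → ℂ :=
  fun z zb w wb =>
    -(D1 (D1b fun a b c d => Complex.log (detg p a b c d)) z zb w wb)

/-- `Ric_{1 2̄}`. -/
def Ric12 (p : ℝ) : ℂ → ℂ → ℂ → ℂ → ℂ :=
  fun z zb w wb =>
    -(D1 (D2b fun a b c d => Complex.log (detg p a b c d)) z zb w wb)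

/-- `Ric_{2 1̄}`. -/
def Ric21 (p : ℝ) : ℂ → ℂ → ℂ → ℂ → ℂ :=
  fun z zb w wb =>
    -(D2 (D1b fun a b c d => Complex.log (detg p a b c d)) z zb w wb)

/-- `Ric_{2 2̄}`. -/
def Ric22 (p : ℝ) : ℂ → ℂ → ℂ → ℂ → ℂ :=
  fun z zb w wb =>
    -(D2 (D2b fun a b c d => Complex.log (detg p a b c d)) z zb w wb)

/-- Determinant of the Bergman metric of `E(1,1,p)` at `(z,0)` with `z` real:
`det g = 2(2p+1)(p²+3p+2)(1-z²)^{-1/p}/(p(p+1)²(1-z²)²)`. -/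
lemma cpow_cpow_neg_two {u c : ℂ} (hu : u ≠ 0) :
    (u ^ c) ^ (-2 : ℂ) = u ^ (-(c + c)) := by
  rw [show ((-2:ℂ)) = ((-2 : ℤ) : ℂ) by norm_num, Complex.cpow_intCast,
    Complex.cpow_neg, Complex.cpow_add _ _ hu]
  ring_nf
  simp [zpow_neg, inv_pow]

lemma cpow_cpow_neg_three {u c : ℂ} (hu : u ≠ 0) :
    (u ^ c) ^ (-3 : ℂ) = u ^ (-(c + c + c)) := by
  rw [show ((-3:ℂ)) = ((-3 : ℤ) : ℂ) by norm_num, Complex.cpow_intCast,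
    Complex.cpow_neg, Complex.cpow_add _ _ hu, Complex.cpow_add _ _ hu]
  ring_nf
  simp [zpow_neg, inv_pow]

lemma Kc_wzero (p : ℝ) (t s : ℂ) (h : 1 - t * s ≠ 0) :
    Kc p t s 0 0 =
      (((p + 1) / (p * Real.pi ^ 2) : ℝ) : ℂ) * (1 - t * s) ^ ((-2 - 1 / p : ℝ) : ℂ) := by
  unfold Kc
  simp only [mul_zero, sub_zero]
  rw [cpow_cpow_neg_two h, cpow_cpow_neg_three h, mul_assoc, mul_assoc,
    ← Complex.cpow_add _ _ h, ← Complex.cpow_add _ _ h,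
    show ((-2 + 1/p : ℝ) : ℂ) + -((((1/p : ℝ)):ℂ) + ((1/p : ℝ):ℂ)) = ((-2 - 1/p : ℝ):ℂ) by
      push_cast; ring,
    show ((-2 + 2/p : ℝ) : ℂ) + -((((1/p : ℝ)):ℂ) + ((1/p : ℝ):ℂ) + ((1/p : ℝ):ℂ))
        = ((-2 - 1/p : ℝ):ℂ) by push_cast; ring,
    ← add_mul, ← Complex.ofReal_add,
    show ((p - 1) / (p * Real.pi ^ 2) + 2 / (p * Real.pi ^ 2) : ℝ)
        = (p + 1) / (p * Real.pi ^ 2) by rw [← add_div]; ring_nf]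

lemma g12_eq (p : ℝ) (z : ℂ) : g12 p z z 0 0 = 0 := by
  simp only [g12, D1, D2b, logK]
  have hfun : (fun t : ℂ => deriv (fun s => Complex.log (Kc p t z 0 s)) 0)
      = fun _ => (0 : ℂ) := by
    funext t
    have h : (fun s : ℂ => Complex.log (Kc p t z 0 s))
        = fun _ => Complex.log (Kc p t z 0 0) := by
      funext s; simp only [Kc, zero_mul, mul_zero]
    rw [h, deriv_const]
  rw [hfun, deriv_const]

lemma g21_eq (p : ℝ) (z : ℂ) : g21 p z z 0 0 = 0 := by
  simp only [g21, D2, D1b, logK]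
  have hfun : (fun t : ℂ => deriv (fun s => Complex.log (Kc p z s t 0)) z)
      = fun _ => deriv (fun s => Complex.log (Kc p z s 0 0)) z := by
    funext t
    congr 1
    funext s
    simp only [Kc, mul_zero, zero_mul]
  rw [hfun, deriv_const]

lemma div_aux {Cc b u t : ℂ} (hC : Cc ≠ 0) (hu : u ≠ 0) (hub : u ^ b ≠ 0) :
    Cc * (b * (u ^ b / u) * -t) / (Cc * u ^ b) = -(b * t) / u := by
  field_simp

open Complex in
lemma g11_eq (p : ℝ) (hp : 0 < p) (z : ℝ) (hz : z ^ 2 < 1) :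
    g11 p (z : ℂ) (z : ℂ) 0 0 = (((2 + 1 / p) / (1 - z ^ 2) ^ 2 : ℝ) : ℂ) := by
  have hr : (0:ℝ) < 1 - z ^ 2 := by linarith
  have hφ : (1 : ℂ) - (z:ℂ) * (z:ℂ) = ((1 - z ^ 2 : ℝ) : ℂ) := by push_cast; ring
  set b : ℂ := ((-2 - 1/p : ℝ) : ℂ) with hb
  set Cc : ℂ := (((p + 1) / (p * Real.pi ^ 2) : ℝ) : ℂ) with hCc
  have hCr : (0:ℝ) < (p + 1) / (p * Real.pi ^ 2) := by positivity
  have hmem1 : (1 : ℂ) - (z:ℂ) * (z:ℂ) ∈ slitPlane := by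
    rw [hφ]; exact Complex.ofReal_mem_slitPlane.mpr hr
  have hmem2 : Cc * ((1:ℂ) - (z:ℂ) * (z:ℂ)) ^ b ∈ slitPlane := by
    rw [hφ, hb, hCc, ← Complex.ofReal_cpow hr.le, ← Complex.ofReal_mul]
    exact Complex.ofReal_mem_slitPlane.mpr (mul_pos hCr (Real.rpow_pos_of_pos hr _))
  have hc1 : ContinuousAt (fun t : ℂ => 1 - t * (z:ℂ)) (z:ℂ) := by fun_prop
  have hev : ∀ᶠ t in nhds (z:ℂ),
      ((1 - t * (z:ℂ)) ∈ slitPlane ∧ Cc * (1 - t * (z:ℂ)) ^ b ∈ slitPlane) := by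
    have h1 := hc1.eventually_mem (isOpen_slitPlane.mem_nhds hmem1)
    have hc2 : ContinuousAt (fun t : ℂ => Cc * (1 - t * (z:ℂ)) ^ b) (z:ℂ) :=
      by
      exact continuousAt_const.mul
        (ContinuousAt.comp (x := (z:ℂ)) (f := fun t : ℂ => 1 - t * (z:ℂ))
          (continuousAt_cpow_const hmem1) hc1)
    have h2 := hc2.eventually_mem (isOpen_slitPlane.mem_nhds hmem2)
    exact h1.and h2
  have hDeq : (fun t : ℂ => D1b (logK p) t (z:ℂ) 0 0)
      =ᶠ[nhds (z:ℂ)] (fun t => -(b * t) / (1 - t * (z:ℂ))) := by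
    filter_upwards [hev] with t ht
    obtain ⟨h1, h2⟩ := ht
    have hu0 : (1:ℂ) - t * (z:ℂ) ≠ 0 := Complex.slitPlane_ne_zero h1
    have hlin : HasDerivAt (fun s : ℂ => 1 - t * s) (-t) (z:ℂ) := by
      exact ((hasDerivAt_const ((z:ℂ)) (1:ℂ)).sub ((hasDerivAt_id ((z:ℂ))).const_mul t)).congr_deriv (by simp)
    have hpow : HasDerivAt (fun s : ℂ => Cc * (1 - t * s) ^ b)
        (Cc * (b * ((1:ℂ) - t * (z:ℂ)) ^ (b - 1) * (-t))) (z:ℂ) :=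
      (hlin.cpow_const h1).const_mul Cc
    have hne : ∀ᶠ s in nhds ((z:ℂ)), (1:ℂ) - t * s ≠ 0 :=
      ContinuousAt.eventually_ne (by fun_prop) hu0
    have hKeq : (fun s : ℂ => Kc p t s 0 0) =ᶠ[nhds ((z:ℂ))]
        (fun s => Cc * (1 - t * s) ^ b) := by
      filter_upwards [hne] with s hs
      exact Kc_wzero p t s hs
    have hKd : HasDerivAt (fun s : ℂ => Kc p t s 0 0)
        (Cc * (b * ((1:ℂ) - t * (z:ℂ)) ^ (b - 1) * (-t))) (z:ℂ) :=
      hpow.congr_of_eventuallyEq hKeq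
    have hKslit : Kc p t (z:ℂ) 0 0 ∈ slitPlane := by
      rw [Kc_wzero p t _ hu0]; exact h2
    have hlog := hKd.clog hKslit
    have hval : D1b (logK p) t (z:ℂ) 0 0
        = Cc * (b * ((1:ℂ) - t * (z:ℂ)) ^ (b - 1) * (-t)) / Kc p t (z:ℂ) 0 0 := by
      simp only [D1b, logK]
      exact hlog.deriv
    rw [hval, Kc_wzero p t _ hu0, Complex.cpow_sub _ _ hu0, Complex.cpow_one]
    have hCne : Cc ≠ 0 := by
      rw [hCc]; exact_mod_cast hCr.ne'
    have hpb : ((1:ℂ) - t * (z:ℂ)) ^ b ≠ 0 := by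
      simp [Complex.cpow_eq_zero_iff, hu0]
    exact div_aux hCne hu0 hpb
  have goal1 : g11 p (z:ℂ) (z:ℂ) 0 0 = deriv (fun t : ℂ => -(b * t) / (1 - t * (z:ℂ))) (z:ℂ) := by
    simp only [g11, D1]
    exact hDeq.deriv_eq
  have hnum : HasDerivAt (fun t : ℂ => -(b * t)) (-b) (z:ℂ) := by
    exact ((hasDerivAt_id ((z:ℂ))).const_mul b).neg.congr_deriv (by simp)
  have hden : HasDerivAt (fun t : ℂ => 1 - t * (z:ℂ)) (-(z:ℂ)) (z:ℂ) := by
    exact ((hasDerivAt_const ((z:ℂ)) (1:ℂ)).sub ((hasDerivAt_id ((z:ℂ))).mul_const ((z:ℂ)))).congr_deriv (by simp)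
  have hd0 : (1:ℂ) - (z:ℂ) * (z:ℂ) ≠ 0 := by
    rw [hφ]; exact_mod_cast hr.ne'
  have hG := hnum.div hden hd0
  rw [goal1, show (fun t : ℂ => -(b * t) / (1 - t * (z:ℂ)))
      = (fun t : ℂ => -(b * t)) / (fun t : ℂ => 1 - t * (z:ℂ)) from rfl, hG.deriv]
  show (-b * ((1:ℂ) - (z:ℂ) * (z:ℂ)) - -(b * (z:ℂ)) * -(z:ℂ)) / ((1:ℂ) - (z:ℂ) * (z:ℂ)) ^ 2 = _
  have hnum_eq : -b * ((1 - z ^ 2 : ℝ):ℂ) - -(b * (z:ℂ)) * -(z:ℂ) = ((2 + 1/p : ℝ):ℂ) := by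
    rw [hb]; push_cast; ring
  rw [hφ, hnum_eq, ← Complex.ofReal_pow, ← Complex.ofReal_div]

open Complex in
lemma g22_eq (p : ℝ) (hp : 0 < p) (z : ℝ) (hz : z ^ 2 < 1) :
    g22 p (z : ℂ) (z : ℂ) 0 0
      = (((2 * p + 4) / (p + 1) * (1 - z ^ 2) ^ (-(1 / p)) : ℝ) : ℂ) := by
  have hr : (0:ℝ) < 1 - z ^ 2 := by linarith
  have hπ : (0:ℝ) < p * Real.pi ^ 2 := by positivity
  have hφ : (1 : ℂ) - (z:ℂ) * (z:ℂ) = ((1 - z ^ 2 : ℝ) : ℂ) := by push_cast; ring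
  have hψ0pos : (0:ℝ) < (1 - z ^ 2) ^ (1/p) := Real.rpow_pos_of_pos hr _
  have key : ∀ t : ℂ, D2b (logK p) (z:ℂ) (z:ℂ) t 0
      = t * (((2 * p + 4) / (p + 1) * (1 - z ^ 2) ^ (-(1 / p)) : ℝ) : ℂ) := by
    intro t
    have hlin : HasDerivAt
        (fun s : ℂ => ((1:ℂ) - (z:ℂ)*(z:ℂ)) ^ ((1/p : ℝ):ℂ) - t * s) (-t) 0 := by
      exact ((hasDerivAt_const (0:ℂ)
        (((1:ℂ) - (z:ℂ)*(z:ℂ)) ^ ((1/p : ℝ):ℂ))).sub ((hasDerivAt_id (0:ℂ)).const_mul t)).congr_deriv (by simp)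
    have hval0 : ((1:ℂ) - (z:ℂ)*(z:ℂ)) ^ ((1/p:ℝ):ℂ) - t * 0
        = (((1 - z ^ 2) ^ (1/p) : ℝ):ℂ) := by
      rw [mul_zero, sub_zero, hφ, ← Complex.ofReal_cpow hr.le]
    have hslit : ((1:ℂ) - (z:ℂ)*(z:ℂ)) ^ ((1/p:ℝ):ℂ) - t * 0 ∈ Complex.slitPlane := by
      rw [hval0]; exact Complex.ofReal_mem_slitPlane.mpr hψ0pos
    have h2 := hlin.cpow_const (c := (-2:ℂ)) hslit
    have h3 := hlin.cpow_const (c := (-3:ℂ)) hslit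
    have hF : HasDerivAt (fun s : ℂ => Kc p (z:ℂ) (z:ℂ) t s)
        ( (((p - 1) / (p * Real.pi ^ 2) : ℝ):ℂ) * ((1:ℂ) - (z:ℂ)*(z:ℂ)) ^ ((-2 + 1/p : ℝ):ℂ)
            * ((-2:ℂ) * (((1:ℂ) - (z:ℂ)*(z:ℂ)) ^ ((1/p:ℝ):ℂ) - t * 0) ^ ((-2:ℂ) - 1) * (-t))
          + ((2 / (p * Real.pi ^ 2) : ℝ):ℂ) * ((1:ℂ) - (z:ℂ)*(z:ℂ)) ^ ((-2 + 2/p : ℝ):ℂ)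
            * ((-3:ℂ) * (((1:ℂ) - (z:ℂ)*(z:ℂ)) ^ ((1/p:ℝ):ℂ) - t * 0) ^ ((-3:ℂ) - 1) * (-t)) )
        0 := by
      unfold Kc
      exact (h2.const_mul _).add (h3.const_mul _)
    have hu0 : (1:ℂ) - (z:ℂ)*(z:ℂ) ≠ 0 := by
      rw [hφ]; exact_mod_cast hr.ne'
    have hF0 : Kc p (z:ℂ) (z:ℂ) t 0
        = (((p + 1) / (p * Real.pi ^ 2) * (1 - z ^ 2) ^ (-2 - 1/p) : ℝ):ℂ) := by
      have e : Kc p (z:ℂ) (z:ℂ) t 0 = Kc p (z:ℂ) (z:ℂ) 0 0 := by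
        simp only [Kc, mul_zero, zero_mul]
      rw [e, Kc_wzero p _ _ hu0, hφ, ← Complex.ofReal_cpow hr.le, ← Complex.ofReal_mul]
    have hF0pos : (0:ℝ) < (p + 1) / (p * Real.pi ^ 2) * (1 - z ^ 2) ^ (-2 - 1/p) := by
      positivity
    have hF0slit : Kc p (z:ℂ) (z:ℂ) t 0 ∈ Complex.slitPlane := by
      rw [hF0]; exact Complex.ofReal_mem_slitPlane.mpr hF0pos
    have hlog := hF.clog hF0slit
    have hD2b : D2b (logK p) (z:ℂ) (z:ℂ) t 0
        = ( (((p - 1) / (p * Real.pi ^ 2) : ℝ):ℂ) * ((1:ℂ) - (z:ℂ)*(z:ℂ)) ^ ((-2 + 1/p : ℝ):ℂ)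
            * ((-2:ℂ) * (((1:ℂ) - (z:ℂ)*(z:ℂ)) ^ ((1/p:ℝ):ℂ) - t * 0) ^ ((-2:ℂ) - 1) * (-t))
          + ((2 / (p * Real.pi ^ 2) : ℝ):ℂ) * ((1:ℂ) - (z:ℂ)*(z:ℂ)) ^ ((-2 + 2/p : ℝ):ℂ)
            * ((-3:ℂ) * (((1:ℂ) - (z:ℂ)*(z:ℂ)) ^ ((1/p:ℝ):ℂ) - t * 0) ^ ((-3:ℂ) - 1) * (-t)) )
          / Kc p (z:ℂ) (z:ℂ) t 0 := by
      simp only [D2b, logK]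
      exact hlog.deriv
    rw [hD2b, hF0, hval0,
      show ((-2:ℂ) - 1) = (((-3 : ℝ)):ℂ) by norm_num,
      show ((-3:ℂ) - 1) = (((-4 : ℝ)):ℂ) by norm_num,
      ← Complex.ofReal_cpow hψ0pos.le, ← Complex.ofReal_cpow hψ0pos.le,
      hφ, ← Complex.ofReal_cpow hr.le, ← Complex.ofReal_cpow hr.le]
    rw [div_eq_iff (by exact_mod_cast hF0pos.ne')]
    -- real-side algebra
    have e1 : (1 - z ^ 2) ^ (-2 + 1/p) * ((1 - z ^ 2) ^ (1/p)) ^ ((-3 : ℝ))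
        = (1 - z ^ 2) ^ (-2 - 2/p) := by
      rw [← Real.rpow_mul hr.le, ← Real.rpow_add hr]
      congr 1; ring
    have e2 : (1 - z ^ 2) ^ (-2 + 2/p) * ((1 - z ^ 2) ^ (1/p)) ^ ((-4 : ℝ))
        = (1 - z ^ 2) ^ (-2 - 2/p) := by
      rw [← Real.rpow_mul hr.le, ← Real.rpow_add hr]
      congr 1; ring
    have e3 : (1 - z ^ 2) ^ (-(1/p)) * (1 - z ^ 2) ^ (-2 - 1/p)
        = (1 - z ^ 2) ^ (-2 - 2/p) := by
      rw [← Real.rpow_add hr]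
      congr 1; ring
    have hco : 2 * ((p - 1) / (p * Real.pi ^ 2)) + 3 * (2 / (p * Real.pi ^ 2))
        = (2 * p + 4) / (p + 1) * ((p + 1) / (p * Real.pi ^ 2)) := by
      have d1 : p * Real.pi ^ 2 ≠ 0 := by positivity
      have d2 : p + 1 ≠ 0 := by positivity
      field_simp
      ring
    have hrealnum :
        2 * ((p - 1) / (p * Real.pi ^ 2))
            * ((1 - z ^ 2) ^ (-2 + 1/p) * ((1 - z ^ 2) ^ (1/p)) ^ ((-3 : ℝ)))
          + 3 * (2 / (p * Real.pi ^ 2))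
            * ((1 - z ^ 2) ^ (-2 + 2/p) * ((1 - z ^ 2) ^ (1/p)) ^ ((-4 : ℝ)))
        = ((2 * p + 4) / (p + 1) * (1 - z ^ 2) ^ (-(1/p)))
            * ((p + 1) / (p * Real.pi ^ 2) * (1 - z ^ 2) ^ (-2 - 1/p)) := by
      rw [e1, e2, show ((2 * p + 4) / (p + 1) * (1 - z ^ 2) ^ (-(1/p)))
            * ((p + 1) / (p * Real.pi ^ 2) * (1 - z ^ 2) ^ (-2 - 1/p))
          = ((2 * p + 4) / (p + 1) * ((p + 1) / (p * Real.pi ^ 2)))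
            * ((1 - z ^ 2) ^ (-(1/p)) * (1 - z ^ 2) ^ (-2 - 1/p)) by ring, e3]
      linear_combination (1 - z ^ 2) ^ (-2 - 2/p) * hco
    have hcc := congrArg (fun x : ℝ => (x : ℂ)) hrealnum
    push_cast at hcc ⊢
    linear_combination (t : ℂ) * hcc
  simp only [g22, D2]
  rw [show (fun t : ℂ => D2b (logK p) (z:ℂ) (z:ℂ) t 0)
      = fun t : ℂ => t * (((2 * p + 4) / (p + 1) * (1 - z ^ 2) ^ (-(1 / p)) : ℝ) : ℂ)
    from funext key]
  have hd : HasDerivAt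
      (fun t : ℂ => t * (((2 * p + 4) / (p + 1) * (1 - z ^ 2) ^ (-(1 / p)) : ℝ) : ℂ))
      (1 * (((2 * p + 4) / (p + 1) * (1 - z ^ 2) ^ (-(1 / p)) : ℝ) : ℂ)) 0 :=
    (hasDerivAt_id (0:ℂ)).mul_const _
  rw [hd.deriv, one_mul]

theorem stmt_5 (p : ℝ) (hp : 0 < p) (z : ℝ) (hz : z ^ 2 < 1) :
    detg p (z : ℂ) (z : ℂ) 0 0 =
      ((2 * (2 * p + 1) * (p ^ 2 + 3 * p + 2) * (1 - z ^ 2) ^ (-(1 / p)) /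
          (p * (p + 1) ^ 2 * (1 - z ^ 2) ^ 2) : ℝ) : ℂ) := by
  have hr : (0:ℝ) < 1 - z ^ 2 := by linarith
  simp only [detg]
  rw [g11_eq p hp z hz, g22_eq p hp z hz, g12_eq p (z:ℂ), g21_eq p (z:ℂ), mul_zero, sub_zero,
    ← Complex.ofReal_mul]
  congr 1
  have h1 : p + 1 ≠ 0 := by positivity
  have h2 : (1 - z ^ 2) ^ 2 ≠ 0 := by positivity
  field_simp
  ring
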